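/- Let X_1, X_2, … be i.i.d. real-valued random variables with E|X_1| < ∞. Then, almost surely, the posterior probability p(T_n = 1 | X_1,…,X_n) under the standard normal Dirichlet process mixture with concentration parameter α = 1 does not converge to 1 as n → ∞; indeed, almost surely, limsup_{n→∞} p(T_n = 1 | X_1,…,X_n) ≤ 1 / ( 1 + (1/(2√2)) exp(−μ²/2) ) < 1, where μ = E X_1. -/

import Mathlib

open MeasureTheory Filter Finset

/-- The standard normal density `φ(u) = (2π)^{-1/2} exp(-u²/2)`. -/
noncomputable def stdNormalPDF (u : ℝ) : ℝ :=
  (Real.sqrt (2 * Real.pi))⁻¹ * Real.exp (-u ^ 2 / 2)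

/-- The single-cluster marginal `m(x_S)` of a unit-variance normal component with
standard normal prior on the mean, in closed form. -/
noncomputable def clusterMarginal {n : ℕ} (x : Fin n → ℝ) (S : Finset (Fin n)) : ℝ :=
  (Real.sqrt (S.card + 1))⁻¹ * (∏ j ∈ S, stdNormalPDF (x j)) *
    Real.exp ((∑ j ∈ S, x j) ^ 2 / (2 * (S.card + 1)))

/-- The set `𝒜_t(n)` of ordered partitions `(A_1, …, A_t)` of `{1,…,n}` into `t`
nonempty disjoint sets. -/
def orderedPartitions (n t : ℕ) : Finset (Fin t → Finset (Fin n)) :=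
  Finset.univ.filter fun A =>
    (∀ i, (A i).Nonempty) ∧ (∀ i j, i ≠ j → Disjoint (A i) (A j)) ∧
      Finset.univ.biUnion A = Finset.univ

/-- The CRP (α = 1) weight `p(A) = (1/(n!·t!)) ∏_i (|A_i| - 1)!` of an ordered partition
of `{1,…,n}` into `t` parts. -/
noncomputable def crpWeight {n t : ℕ} (A : Fin t → Finset (Fin n)) : ℝ :=
  (1 / ((n.factorial : ℝ) * (t.factorial : ℝ))) * ∏ i, (((A i).card - 1).factorial : ℝ)

/-- The joint law of the data and the number of clusters under the standard normal DPM
with concentration parameter `α = 1`: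
`p(x, T_n = t) = ∑_{A ∈ 𝒜_t(n)} p(A) ∏_i m(x_{A_i})`. -/
noncomputable def pJoint (n t : ℕ) (x : Fin n → ℝ) : ℝ :=
  ∑ A ∈ orderedPartitions n t, crpWeight A * ∏ i, clusterMarginal x (A i)

/-- The posterior probability of one cluster,
`p(T_n = 1 | x) = p(x, T_n = 1) / ∑_{t=1}^n p(x, T_n = t)`. -/
noncomputable def posteriorOne (n : ℕ) (x : Fin n → ℝ) : ℝ :=
  pJoint n 1 x / ∑ t ∈ Finset.Icc 1 n, pJoint n t x

lemma stdNormalPDF_pos (u : ℝ) : 0 < stdNormalPDF u := by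
  unfold stdNormalPDF
  have : 0 < Real.sqrt (2 * Real.pi) := Real.sqrt_pos.2 (by positivity)
  positivity

lemma clusterMarginal_pos {n : ℕ} (x : Fin n → ℝ) (S : Finset (Fin n)) :
    0 < clusterMarginal x S := by
  unfold clusterMarginal
  have h1 : 0 < Real.sqrt ((S.card : ℝ) + 1) := Real.sqrt_pos.2 (by positivity)
  have h2 : 0 < ∏ j ∈ S, stdNormalPDF (x j) := Finset.prod_pos fun j _ => stdNormalPDF_pos _
  positivity

lemma crpWeight_pos {n t : ℕ} (A : Fin t → Finset (Fin n)) : 0 < crpWeight A := by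
  unfold crpWeight
  have h1 : (0:ℝ) < n.factorial := by exact_mod_cast n.factorial_pos
  have h2 : (0:ℝ) < t.factorial := by exact_mod_cast t.factorial_pos
  have h3 : 0 < ∏ i : Fin t, (((A i).card - 1).factorial : ℝ) :=
    Finset.prod_pos fun i _ => by exact_mod_cast ((A i).card - 1).factorial_pos
  positivity

lemma pJoint_nonneg (n t : ℕ) (x : Fin n → ℝ) : 0 ≤ pJoint n t x :=
  Finset.sum_nonneg fun A _ => le_of_lt <| mul_pos (crpWeight_pos A)
    (Finset.prod_pos fun i _ => clusterMarginal_pos x (A i))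

lemma posteriorOne_nonneg (n : ℕ) (x : Fin n → ℝ) : 0 ≤ posteriorOne n x :=
  div_nonneg (pJoint_nonneg n 1 x) (Finset.sum_nonneg fun t _ => pJoint_nonneg n t x)

lemma orderedPartitions_one (n : ℕ) (hn : 1 ≤ n) :
    orderedPartitions n 1 = {fun _ => Finset.univ} := by
  have : NeZero n := ⟨by omega⟩
  ext A
  simp only [orderedPartitions, Finset.mem_filter, Finset.mem_univ, true_and,
    Finset.mem_singleton]
  constructor
  · rintro ⟨-, -, h⟩
    funext i
    have hi : i = 0 := Subsingleton.elim _ _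
    subst hi
    rw [← h]
    ext a
    simp
  · rintro rfl
    refine ⟨fun i => Finset.univ_nonempty, fun i j hij => absurd (Subsingleton.elim i j) hij, ?_⟩
    ext a; simp

lemma crpWeight_one (n : ℕ) (hn : 1 ≤ n) :
    crpWeight (fun _ : Fin 1 => (Finset.univ : Finset (Fin n))) = 1 / (n : ℝ) := by
  rw [crpWeight, Fin.prod_univ_one]
  simp only [Finset.card_univ, Fintype.card_fin, Nat.factorial_one, mul_one]
  obtain ⟨m, rfl⟩ : ∃ m, n = m + 1 := ⟨n - 1, (Nat.succ_pred_eq_of_pos hn).symm⟩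
  have hfac : ((m+1).factorial : ℝ) = (m+1 : ℕ) * ((m+1-1).factorial : ℝ) := by
    simp [Nat.factorial_succ]
  have hn' : ((m:ℝ)+1) ≠ 0 := by positivity
  have h2 : ((m+1-1).factorial : ℝ) ≠ 0 := by exact_mod_cast (m+1-1).factorial_pos.ne'
  rw [hfac]
  field_simp
  ring

lemma pJoint_one (n : ℕ) (hn : 1 ≤ n) (x : Fin n → ℝ) :
    pJoint n 1 x = (1 / (n : ℝ)) * clusterMarginal x Finset.univ := by
  rw [pJoint, orderedPartitions_one n hn, Finset.sum_singleton, Fin.prod_univ_one,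
    crpWeight_one n hn]

def Pk (n : ℕ) (k : Fin n) : Fin 2 → Finset (Fin n) := ![{k}ᶜ, {k}]

lemma Pk_mem {n : ℕ} (hn : 2 ≤ n) (k : Fin n) : Pk n k ∈ orderedPartitions n 2 := by
  simp only [orderedPartitions, Finset.mem_filter, Finset.mem_univ, true_and]
  refine ⟨?_, ?_, ?_⟩
  · intro i
    fin_cases i
    · show (({k}ᶜ : Finset (Fin n))).Nonempty
      obtain ⟨j, hj⟩ := Fintype.exists_ne_of_one_lt_card (by simp; omega) k
      exact ⟨j, Finset.mem_compl.2 (by simpa using hj)⟩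
    · simp [Pk]
  · intro i j hij
    fin_cases i <;> fin_cases j <;>
      simp_all [Pk, disjoint_compl_left, disjoint_compl_right]
  · ext a
    simp only [Finset.mem_biUnion, Finset.mem_univ, true_and, iff_true, Fin.exists_fin_two]
    by_cases h : a = k
    · right; simp [Pk, h]
    · left; simp [Pk, h]

lemma Pk_inj {n : ℕ} : Function.Injective (Pk n) := by
  intro k k' h
  have := congrFun h 1
  simpa [Pk] using this

lemma clusterMarginal_singleton {n : ℕ} (x : Fin n → ℝ) (k : Fin n) :
    clusterMarginal x {k} =
      (Real.sqrt 2)⁻¹ * stdNormalPDF (x k) * Real.exp ((x k) ^ 2 / 4) := by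
  rw [clusterMarginal]
  simp only [Finset.card_singleton, Finset.sum_singleton, Finset.prod_singleton]
  norm_num

lemma clusterMarginal_compl {n : ℕ} (hn : 1 ≤ n) (x : Fin n → ℝ) (k : Fin n) :
    clusterMarginal x {k}ᶜ =
      (Real.sqrt n)⁻¹ * (∏ j ∈ {k}ᶜ, stdNormalPDF (x j)) *
        Real.exp ((∑ j, x j - x k) ^ 2 / (2 * n)) := by
  rw [clusterMarginal]
  have hcard : ({k}ᶜ : Finset (Fin n)).card = n - 1 := by
    rw [Finset.card_compl, Finset.card_singleton, Fintype.card_fin]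
  have hcast : (({k}ᶜ : Finset (Fin n)).card : ℝ) + 1 = n := by
    rw [hcard]; have : (1:ℕ) ≤ n := hn; push_cast [this]; ring
  have hsum : ∑ j ∈ ({k}ᶜ : Finset (Fin n)), x j = ∑ j, x j - x k := by
    have := Finset.sum_compl_add_sum ({k} : Finset (Fin n)) x
    simp only [Finset.sum_singleton] at this
    linarith
  rw [hcast, hsum]

lemma clusterMarginal_univ {n : ℕ} (x : Fin n → ℝ) :
    clusterMarginal x Finset.univ =
      (Real.sqrt ((n:ℝ) + 1))⁻¹ * (∏ j, stdNormalPDF (x j)) *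
        Real.exp ((∑ j, x j) ^ 2 / (2 * ((n:ℝ) + 1))) := by
  rw [clusterMarginal]
  simp [Finset.card_univ]

lemma crpWeight_Pk {n : ℕ} (hn : 2 ≤ n) (k : Fin n) :
    crpWeight (Pk n k) = 1 / (2 * (n : ℝ) * ((n : ℝ) - 1)) := by
  obtain ⟨m, rfl⟩ : ∃ m, n = m + 2 := ⟨n - 2, by omega⟩
  rw [crpWeight, Fin.prod_univ_two]
  simp only [Pk, Matrix.cons_val_zero, Matrix.cons_val_one, Matrix.head_cons,
    Finset.card_compl, Finset.card_singleton, Fintype.card_fin]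
  norm_num
  have hfac : (((m+2).factorial : ℕ) : ℝ) = ((m:ℝ)+2) * (((m:ℝ)+1) * (m.factorial : ℝ)) := by
    rw [show (m+2).factorial = (m+2) * ((m+1) * m.factorial) by
      rw [Nat.factorial_succ, Nat.factorial_succ]]
    push_cast
    ring
  have h1 : ((m.factorial : ℝ)) ≠ 0 := by
    have : (0:ℝ) < (m.factorial : ℝ) := by exact_mod_cast m.factorial_pos
    exact this.ne'
  have h2 : ((m:ℝ)+2) ≠ 0 := by positivity
  have h3 : ((m:ℝ)+1) ≠ 0 := by positivity
  have h4 : ((m:ℝ)+2-1) ≠ 0 := by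
    have : ((m:ℝ)+2-1) = (m:ℝ)+1 := by ring
    rw [this]; exact h3
  rw [hfac]
  field_simp
  ring

noncomputable def bfun (n : ℕ) (s : ℝ) : ℝ :=
  ((n : ℝ) * Real.sqrt ((n:ℝ) + 1)) / (2 * ((n:ℝ) - 1) * (Real.sqrt n * Real.sqrt 2)) *
    Real.exp (-(s / (n:ℝ)) ^ 2 * ((n:ℝ) + 2) / (2 * ((n:ℝ) + 1)))

lemma bfun_pos {n : ℕ} (hn : 2 ≤ n) (s : ℝ) : 0 < bfun n s := by
  have h1 : (2:ℝ) ≤ (n:ℝ) := by exact_mod_cast hn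
  have h2 : (0:ℝ) < Real.sqrt ((n:ℝ) + 1) := Real.sqrt_pos.2 (by linarith)
  have h3 : (0:ℝ) < Real.sqrt (n:ℝ) := Real.sqrt_pos.2 (by linarith)
  have h4 : (0:ℝ) < Real.sqrt 2 := Real.sqrt_pos.2 (by norm_num)
  have h5 : (0:ℝ) < (n:ℝ) - 1 := by linarith
  have h6 : (0:ℝ) < (n:ℝ) := by linarith
  unfold bfun
  positivity

lemma exponent_ineq (N s x : ℝ) (hN : 2 ≤ N) :
    -(s / N) ^ 2 * (N + 2) / (2 * (N + 1)) + s ^ 2 / (2 * (N + 1)) ≤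
      (s - x) ^ 2 / (2 * N) + x ^ 2 / 4 := by
  have h1 : (0:ℝ) < N := by linarith
  have h2 : (0:ℝ) < N + 1 := by linarith
  have key : -(s / N) ^ 2 * (N + 2) / (2 * (N + 1)) + s ^ 2 / (2 * (N + 1)) =
      s ^ 2 * (N - 2) / (2 * N ^ 2) := by
    field_simp
    ring
  rw [key, div_add_div _ _ (by positivity) (by norm_num : (4:ℝ) ≠ 0),
    div_le_div_iff₀ (by positivity) (by positivity)]
  nlinarith [sq_nonneg (N * x - 2 * s), sq_nonneg x, sq_nonneg s, sq_nonneg (N * x)]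

lemma perk {n : ℕ} (hn : 2 ≤ n) (x : Fin n → ℝ) (k : Fin n) :
    (bfun n (∑ j, x j) / n) * pJoint n 1 x ≤
      crpWeight (Pk n k) * (clusterMarginal x {k}ᶜ * clusterMarginal x {k}) := by
  have hN : (2:ℝ) ≤ (n:ℝ) := by exact_mod_cast hn
  have hNpos : (0:ℝ) < (n:ℝ) := by linarith
  have hs2 : (0:ℝ) < Real.sqrt 2 := Real.sqrt_pos.2 (by norm_num)
  have hsn : (0:ℝ) < Real.sqrt (n:ℝ) := Real.sqrt_pos.2 hNpos
  have hsn1 : (0:ℝ) < Real.sqrt ((n:ℝ) + 1) := Real.sqrt_pos.2 (by linarith)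
  have hΦpos : (0:ℝ) < ∏ j, stdNormalPDF (x j) :=
    Finset.prod_pos fun j _ => stdNormalPDF_pos _
  rw [pJoint_one n (by omega), crpWeight_Pk hn, clusterMarginal_compl (by omega),
    clusterMarginal_singleton, clusterMarginal_univ, bfun]
  set s := ∑ j, x j with hs
  set Φ := ∏ j, stdNormalPDF (x j) with hΦ
  have hprod : (∏ j ∈ ({k}ᶜ : Finset (Fin n)), stdNormalPDF (x j)) * stdNormalPDF (x k) = Φ := by
    have := Finset.prod_compl_mul_prod ({k} : Finset (Fin n)) (fun j => stdNormalPDF (x j))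
    simpa using this
  set Φk := ∏ j ∈ ({k}ᶜ : Finset (Fin n)), stdNormalPDF (x j) with hΦk
  set C : ℝ := Φ * (2 * (n:ℝ) * ((n:ℝ) - 1) * Real.sqrt (n:ℝ) * Real.sqrt 2)⁻¹ with hC
  have hCpos : 0 < C := by
    have : (0:ℝ) < (n:ℝ) - 1 := by linarith
    positivity
  have hL : ((n : ℝ) * Real.sqrt ((n:ℝ) + 1)) /
        (2 * ((n:ℝ) - 1) * (Real.sqrt n * Real.sqrt 2)) *
      Real.exp (-(s / (n:ℝ)) ^ 2 * ((n:ℝ) + 2) / (2 * ((n:ℝ) + 1))) / n *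
      (1 / (n : ℝ) * ((Real.sqrt ((n:ℝ) + 1))⁻¹ * Φ *
        Real.exp (s ^ 2 / (2 * ((n:ℝ) + 1))))) =
      C * Real.exp (-(s / (n:ℝ)) ^ 2 * ((n:ℝ) + 2) / (2 * ((n:ℝ) + 1)) +
        s ^ 2 / (2 * ((n:ℝ) + 1))) := by
    rw [Real.exp_add, hC]
    have h5 : ((n:ℝ) - 1) ≠ 0 := by linarith
    field_simp
  have hR : 1 / (2 * (n : ℝ) * ((n : ℝ) - 1)) *
      ((Real.sqrt (n:ℝ))⁻¹ * Φk * Real.exp ((s - x k) ^ 2 / (2 * (n:ℝ))) *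
        ((Real.sqrt 2)⁻¹ * stdNormalPDF (x k) * Real.exp ((x k) ^ 2 / 4))) =
      C * Real.exp ((s - x k) ^ 2 / (2 * (n:ℝ)) + (x k) ^ 2 / 4) := by
    rw [Real.exp_add, hC, ← hprod]
    have h5 : ((n:ℝ) - 1) ≠ 0 := by linarith
    field_simp
  rw [hL, hR]
  exact mul_le_mul_of_nonneg_left
    (Real.exp_le_exp.mpr (exponent_ineq (n:ℝ) s (x k) hN)) hCpos.le

lemma key_ineq {n : ℕ} (hn : 2 ≤ n) (x : Fin n → ℝ) :
    bfun n (∑ j, x j) * pJoint n 1 x ≤ pJoint n 2 x := by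
  have step1 : ∑ k : Fin n, crpWeight (Pk n k) * ∏ i, clusterMarginal x (Pk n k i) ≤
      pJoint n 2 x := by
    rw [pJoint, ← Finset.sum_image (f := fun A => crpWeight A * ∏ i, clusterMarginal x (A i))
      (g := Pk n) (by intro a _ b _ h; exact Pk_inj h)]
    refine Finset.sum_le_sum_of_subset_of_nonneg ?_ ?_
    · intro A hA
      rw [Finset.mem_image] at hA
      obtain ⟨k, -, rfl⟩ := hA
      exact Pk_mem hn k
    · intro A _ _
      exact le_of_lt <| mul_pos (crpWeight_pos A)
        (Finset.prod_pos fun i _ => clusterMarginal_pos x (A i))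
  have step2 : bfun n (∑ j, x j) * pJoint n 1 x ≤
      ∑ k : Fin n, crpWeight (Pk n k) * ∏ i, clusterMarginal x (Pk n k i) := by
    have hNpos : (0:ℝ) < (n:ℝ) := by positivity
    have hrw : bfun n (∑ j, x j) * pJoint n 1 x =
        ∑ _k : Fin n, (bfun n (∑ j, x j) / n) * pJoint n 1 x := by
      rw [Finset.sum_const, Finset.card_univ, Fintype.card_fin, nsmul_eq_mul]
      field_simp
    rw [hrw]
    refine Finset.sum_le_sum fun k _ => ?_
    have := perk hn x k
    calc (bfun n (∑ j, x j) / n) * pJoint n 1 x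
        ≤ crpWeight (Pk n k) * (clusterMarginal x {k}ᶜ * clusterMarginal x {k}) := this
      _ = crpWeight (Pk n k) * ∏ i, clusterMarginal x (Pk n k i) := by
          rw [Fin.prod_univ_two]
          simp [Pk]
  exact step2.trans step1

lemma posterior_le {n : ℕ} (hn : 2 ≤ n) (x : Fin n → ℝ) :
    posteriorOne n x ≤ 1 / (1 + bfun n (∑ j, x j)) := by
  set b := bfun n (∑ j, x j) with hb
  have hbpos : 0 < b := bfun_pos hn _
  have hp1 : 0 < pJoint n 1 x := by
    rw [pJoint_one n (by omega)]
    have : (0:ℝ) < (n:ℝ) := by positivity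
    have := clusterMarginal_pos x (Finset.univ : Finset (Fin n))
    positivity
  have hsum : (1 + b) * pJoint n 1 x ≤ ∑ t ∈ Finset.Icc 1 n, pJoint n t x := by
    have h12 : ({1, 2} : Finset ℕ) ⊆ Finset.Icc 1 n := by
      intro t ht
      simp only [Finset.mem_insert, Finset.mem_singleton] at ht
      rcases ht with rfl | rfl <;> simp [Finset.mem_Icc] <;> omega
    have hsub : ∑ t ∈ ({1, 2} : Finset ℕ), pJoint n t x ≤ ∑ t ∈ Finset.Icc 1 n, pJoint n t x :=
      Finset.sum_le_sum_of_subset_of_nonneg h12 fun t _ _ => pJoint_nonneg n t x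
    have h2 : ∑ t ∈ ({1, 2} : Finset ℕ), pJoint n t x = pJoint n 1 x + pJoint n 2 x := by
      rw [Finset.sum_insert (by norm_num), Finset.sum_singleton]
    calc (1 + b) * pJoint n 1 x = pJoint n 1 x + b * pJoint n 1 x := by ring
      _ ≤ pJoint n 1 x + pJoint n 2 x := by linarith [key_ineq hn x]
      _ ≤ _ := by rw [← h2]; exact hsub
  have hpos : (0:ℝ) < (1 + b) * pJoint n 1 x := by positivity
  calc posteriorOne n x ≤ pJoint n 1 x / ((1 + b) * pJoint n 1 x) :=
        div_le_div_of_nonneg_left hp1.le hpos hsum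
    _ = 1 / (1 + b) := by
        rw [eq_div_iff (by positivity)]
        field_simp

open scoped Topology

lemma aux_tendsto_inv_nat : Tendsto (fun n : ℕ => ((n:ℝ))⁻¹) atTop (𝓝 0) :=
  tendsto_inv_atTop_zero.comp tendsto_natCast_atTop_atTop

lemma aux_tendsto_ratio1 : Tendsto (fun n : ℕ => ((n:ℝ) + 1) / n) atTop (𝓝 1) := by
  have h : Tendsto (fun n : ℕ => 1 + ((n:ℝ))⁻¹) atTop (𝓝 (1 + 0)) :=
    tendsto_const_nhds.add aux_tendsto_inv_nat
  rw [add_zero] at h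
  refine h.congr' ?_
  filter_upwards [eventually_ge_atTop 1] with n hn
  have : ((n:ℝ)) ≠ 0 := by positivity
  field_simp

lemma aux_tendsto_ratio2 : Tendsto (fun n : ℕ => (n:ℝ) / (2 * ((n:ℝ) - 1))) atTop (𝓝 (1/2)) := by
  have h0 : Tendsto (fun n : ℕ => ((n:ℝ) - 1)) atTop atTop :=
    tendsto_atTop_add_const_right _ (-1) tendsto_natCast_atTop_atTop
  have h1 : Tendsto (fun n : ℕ => ((n:ℝ) - 1)⁻¹) atTop (𝓝 0) :=
    tendsto_inv_atTop_zero.comp h0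
  have h : Tendsto (fun n : ℕ => (1 + ((n:ℝ) - 1)⁻¹) * (1/2)) atTop (𝓝 ((1 + 0) * (1/2))) :=
    (tendsto_const_nhds.add h1).mul tendsto_const_nhds
  norm_num at h
  refine h.congr' ?_
  filter_upwards [eventually_ge_atTop 2] with n hn
  have h2 : (2:ℝ) ≤ (n:ℝ) := by exact_mod_cast hn
  have h3 : ((n:ℝ) - 1) ≠ 0 := by linarith
  field_simp
  ring

lemma aux_tendsto_ratio3 : Tendsto (fun n : ℕ => ((n:ℝ) + 2) / (2 * ((n:ℝ) + 1))) atTop (𝓝 (1/2)) := by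
  have h0 : Tendsto (fun n : ℕ => ((n:ℝ) + 1)) atTop atTop :=
    tendsto_atTop_add_const_right _ 1 tendsto_natCast_atTop_atTop
  have h1 : Tendsto (fun n : ℕ => ((n:ℝ) + 1)⁻¹) atTop (𝓝 0) :=
    tendsto_inv_atTop_zero.comp h0
  have h : Tendsto (fun n : ℕ => (1 + ((n:ℝ) + 1)⁻¹) * (1/2)) atTop (𝓝 ((1 + 0) * (1/2))) :=
    (tendsto_const_nhds.add h1).mul tendsto_const_nhds
  norm_num at h
  refine h.congr' ?_
  filter_upwards [eventually_ge_atTop 1] with n hn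
  have : ((n:ℝ) + 1) ≠ 0 := by positivity
  field_simp
  ring

lemma bfun_tendsto (μ' : ℝ) (u : ℕ → ℝ)
    (hu : Tendsto (fun n : ℕ => u n / n) atTop (𝓝 μ')) :
    Tendsto (fun n : ℕ => bfun n (u n)) atTop
      (𝓝 (1 / (2 * Real.sqrt 2) * Real.exp (-μ' ^ 2 / 2))) := by
  have hs2 : (0:ℝ) < Real.sqrt 2 := Real.sqrt_pos.2 (by norm_num)
  -- the constant factor
  have hA : Tendsto (fun n : ℕ =>
      ((n : ℝ) * Real.sqrt ((n:ℝ) + 1)) / (2 * ((n:ℝ) - 1) * (Real.sqrt n * Real.sqrt 2)))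
      atTop (𝓝 (1 / (2 * Real.sqrt 2))) := by
    have hsq : Tendsto (fun n : ℕ => Real.sqrt (((n:ℝ) + 1) / n)) atTop (𝓝 1) := by
      have h := (Real.continuous_sqrt.tendsto 1).comp aux_tendsto_ratio1
      rw [Real.sqrt_one] at h
      exact h
    have h := (hsq.mul aux_tendsto_ratio2).mul
      (tendsto_const_nhds : Tendsto (fun _ : ℕ => (Real.sqrt 2)⁻¹) atTop _)
    have hlim : (1 : ℝ) * (1/2) * (Real.sqrt 2)⁻¹ = 1 / (2 * Real.sqrt 2) := by
      field_simp
    rw [hlim] at h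
    refine h.congr' ?_
    filter_upwards [eventually_ge_atTop 2] with n hn
    have h2 : (2:ℝ) ≤ (n:ℝ) := by exact_mod_cast hn
    have hnpos : (0:ℝ) < n := by linarith
    have hsn : (0:ℝ) < Real.sqrt (n:ℝ) := Real.sqrt_pos.2 hnpos
    have hdiv : Real.sqrt (((n:ℝ) + 1) / n) = Real.sqrt ((n:ℝ) + 1) / Real.sqrt n :=
      Real.sqrt_div (by linarith) _
    rw [hdiv]
    have hsq2 : Real.sqrt (n:ℝ) ^ 2 = (n:ℝ) := Real.sq_sqrt hnpos.le
    have hne1 : ((n:ℝ) - 1) ≠ 0 := by linarith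
    field_simp
  -- the exponential factor
  have hE : Tendsto (fun n : ℕ =>
      -(u n / (n:ℝ)) ^ 2 * ((n:ℝ) + 2) / (2 * ((n:ℝ) + 1))) atTop (𝓝 (-μ' ^ 2 / 2)) := by
    have h1 : Tendsto (fun n : ℕ => -(u n / (n:ℝ)) ^ 2) atTop (𝓝 (-μ' ^ 2)) := by
      have h := (hu.mul hu).neg
      have heq : -(μ' * μ') = -μ' ^ 2 := by ring
      rw [heq] at h
      exact h.congr fun n => by ring
    have h := h1.mul aux_tendsto_ratio3
    have : (-μ' ^ 2) * (1/2) = -μ' ^ 2 / 2 := by ring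
    rw [this] at h
    refine h.congr ?_
    intro n; ring
  have := hA.mul ((Real.continuous_exp.tendsto _).comp hE)
  exact this.congr fun n => rfl

/-- If `X₁, X₂, …` are i.i.d. real-valued with `E|X₁| < ∞` and mean `μ' = E X₁`, then
almost surely the posterior probability `p(T_n = 1 | X_{1:n})` under the standard normal
DPM with `α = 1` does not converge to `1`; indeed, almost surely
`limsup_n p(T_n = 1 | X_{1:n}) ≤ 1/(1 + (1/(2√2)) exp(-μ'²/2)) < 1`. -/
theorem posterior_one_not_consistent_integrable {Ω : Type*} [MeasurableSpace Ω]
    (μ : Measure Ω) [IsProbabilityMeasure μ] (X : ℕ → Ω → ℝ)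
    (hmeas : ∀ i, Measurable (X i))
    (hindep : ProbabilityTheory.iIndepFun X μ)
    (hident : ∀ i, ProbabilityTheory.IdentDistrib (X i) (X 0) μ μ)
    (hint : Integrable (X 0) μ) :
    1 / (1 + 1 / (2 * Real.sqrt 2) * Real.exp (-(∫ ω, X 0 ω ∂μ) ^ 2 / 2)) < 1 ∧
    ∀ᵐ ω ∂μ,
      ¬ Tendsto (fun n : ℕ => posteriorOne n fun i : Fin n => X i ω) atTop (nhds 1) ∧
      Filter.limsup (fun n : ℕ => posteriorOne n fun i : Fin n => X i ω) atTop ≤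
        1 / (1 + 1 / (2 * Real.sqrt 2) * Real.exp (-(∫ ω, X 0 ω ∂μ) ^ 2 / 2)) := by
  set μ' : ℝ := ∫ ω, X 0 ω ∂μ with hμ'
  set c : ℝ := 1 / (2 * Real.sqrt 2) * Real.exp (-μ' ^ 2 / 2) with hc
  have hs2 : (0:ℝ) < Real.sqrt 2 := Real.sqrt_pos.2 (by norm_num)
  have hcpos : 0 < c := by rw [hc]; positivity
  have hlt : 1 / (1 + c) < 1 := by
    rw [div_lt_one (by linarith)]
    linarith
  refine ⟨hlt, ?_⟩
  have hpair : Pairwise (Function.onFun (ProbabilityTheory.IndepFun · · μ) X) :=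
    fun i j hij => hindep.indepFun hij
  filter_upwards [ProbabilityTheory.strong_law_ae_real X hint hpair hident] with ω hω
  set u : ℕ → ℝ := fun n => ∑ i ∈ Finset.range n, X i ω with hu
  have hb : Tendsto (fun n : ℕ => bfun n (u n)) atTop (𝓝 c) := bfun_tendsto μ' u hω
  set f : ℕ → ℝ := fun n => posteriorOne n fun i : Fin n => X i ω with hf
  have hv : Tendsto (fun n : ℕ => 1 / (1 + bfun n (u n))) atTop (𝓝 (1 / (1 + c))) := by
    refine Tendsto.div tendsto_const_nhds (tendsto_const_nhds.add hb) (by linarith)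
  have hle : ∀ᶠ n in atTop, f n ≤ 1 / (1 + bfun n (u n)) := by
    filter_upwards [eventually_ge_atTop 2] with n hn
    have hsum : (∑ j : Fin n, X (j : ℕ) ω) = u n := Fin.sum_univ_eq_sum_range (fun i => X i ω) n
    have := posterior_le hn (fun i : Fin n => X i ω)
    rwa [hsum] at this
  have hlimsup : Filter.limsup f atTop ≤ 1 / (1 + c) := by
    have hcob : Filter.IsCoboundedUnder (· ≤ ·) atTop f :=
      isCoboundedUnder_le_of_le atTop (x := 0) fun n => posteriorOne_nonneg n _
    have hbdd : Filter.IsBoundedUnder (· ≤ ·) atTop (fun n : ℕ => 1 / (1 + bfun n (u n))) :=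
      hv.isBoundedUnder_le
    calc Filter.limsup f atTop ≤ Filter.limsup (fun n : ℕ => 1 / (1 + bfun n (u n))) atTop :=
          Filter.limsup_le_limsup hle hcob hbdd
      _ = 1 / (1 + c) := hv.limsup_eq
  refine ⟨?_, hlimsup⟩
  intro ht
  have h1 : Filter.limsup f atTop = 1 := ht.limsup_eq
  rw [h1] at hlimsup
  linarith
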